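/- Let R be a commutative ring, f_0, ..., f_n a Koszul-regular sequence in R, and d_0, ..., d_n positive integers. Let C^• be the complex of R[t]-modules with C^{-p} = Λ^p(M^{n+1}) where M = (1/(x_0···x_n))·R[t, x_0^{-1}, ..., x_n^{-1}], and differentials induced by the elements f_i - x_i·t^{d_i}, where multiplication by x_i annihilates M's 'top' part so that the induced maps are multiplication by f_i. Then the cohomology of C^• is concentrated in degree 0 and equals (1/(x_0···x_n))·(R/(f_0, ..., f_n))[t, x_0^{-1}, ..., x_n^{-1}]. -/

import Mathlib

set_option maxHeartbeats 1000000
set_option synthInstance.maxHeartbeats 400000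

open TensorProduct

/-- A sequence `f 0, ..., f (k-1)` in a commutative ring `R` is *Koszul-regular* if the
Koszul complex `K_•(f; R)` has vanishing homology in all positive degrees. -/
def IsKoszulRegular {R : Type*} [CommRing R] {k : ℕ} (f : Fin k → R) : Prop :=
  ∀ p : ℕ, 0 < p → ∀ x ∈ ⋀[R]^p (Fin k → R),
    CliffordAlgebra.contractLeft ((Pi.basisFun R (Fin k)).constr R f) x = 0 →
      ∃ y ∈ ⋀[R]^(p + 1) (Fin k → R),
        CliffordAlgebra.contractLeft ((Pi.basisFun R (Fin k)).constr R f) y = x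

section Ebasis
variable {R : Type*} [CommRing R] {M : Type*} [AddCommGroup M] [Module R M]
  {κ : Type*} [DecidableEq κ] (c : Module.Basis κ R M)

noncomputable def Ebasis (A : Type*) [AddCommGroup A] [Module R A] :
    A ⊗[R] M ≃ₗ[R] κ →₀ A :=
  (TensorProduct.congr (LinearEquiv.refl R A) c.repr).trans
    (TensorProduct.finsuppScalarRight R R A κ)

lemma Ebasis_tmul (A : Type*) [AddCommGroup A] [Module R A] (a : A) (m : M) (k : κ) :
    Ebasis c A (a ⊗ₜ[R] m) k = c.repr m k • a := by
  simp [Ebasis]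

lemma Ebasis_natural {A B : Type*} [AddCommGroup A] [Module R A] [AddCommGroup B]
    [Module R B] (g : A →ₗ[R] B) (x : A ⊗[R] M) :
    Ebasis c B (LinearMap.rTensor M g x) = (Ebasis c A x).mapRange g (map_zero g) := by
  induction x using TensorProduct.induction_on with
  | zero => simp
  | tmul a m => ext k; simp [Ebasis_tmul, LinearMap.rTensor_tmul, map_smul]
  | add x y hx hy => ext k; simp [map_add, hx, hy]

end Ebasis

/-- Let `f_0, ..., f_n` be Koszul-regular in `R` and `d_i ≥ 1`.  Let
`M = (1/(x_0⋯x_n))·R[t, x_0⁻¹, ..., x_n⁻¹]` be the free `R[t]`-module on the monomials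
`x_0^{-a_0-1}⋯x_n^{-a_n-1}` (encoded by a basis `b` indexed by exponent vectors
`a : Fin (n+1) → ℕ`), and let `C^•` be the complex with `C^{-p} = Λᵖ(M^{n+1})` and
differentials induced by the elements `f_i - x_i·t^{d_i}`.  Since multiplication by `x_i`
annihilates the top part of `M`, the differential acts as the Koszul differential of
`f_0, ..., f_n` tensored (over `R`) with the free `R`-module `M`; we realize `C^•` inside
`(⋀ R^{n+1}) ⊗_R M` with differential the contraction against `f` tensored with `M`.
Then the cohomology of `C^•` is concentrated in degree `0`, where it equals
`(1/(x_0⋯x_n))·(R/(f_0, ..., f_n))[t, x_0⁻¹, ..., x_n⁻¹]`: the complex is exact in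
negative degrees, `1 ⊗ m` is a boundary iff `m ∈ (f)·M`, and `M/(f)·M` is the free
`(R/(f))[t]`-module on the same monomials. -/
theorem koszul_negative_monomials_resolution {R : Type*} [CommRing R] {n : ℕ}
    (f : Fin (n + 1) → R) (d : Fin (n + 1) → ℕ) (hd : ∀ i, 1 ≤ d i)
    (hf : IsKoszulRegular f)
    (M : Type*) [AddCommGroup M] [Module (Polynomial R) M] [Module R M]
    [IsScalarTower R (Polynomial R) M]
    (b : Module.Basis (Fin (n + 1) → ℕ) (Polynomial R) M) :
    (∀ p : ℕ, 0 < p →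
      ∀ x ∈ LinearMap.range
          (LinearMap.rTensor M (⋀[R]^p (Fin (n + 1) → R)).subtype),
        LinearMap.rTensor M
            (CliffordAlgebra.contractLeft ((Pi.basisFun R (Fin (n + 1))).constr R f)) x
          = 0 →
        ∃ y ∈ LinearMap.range
            (LinearMap.rTensor M (⋀[R]^(p + 1) (Fin (n + 1) → R)).subtype),
          LinearMap.rTensor M
              (CliffordAlgebra.contractLeft ((Pi.basisFun R (Fin (n + 1))).constr R f)) y
            = x) ∧
    (∀ m : M,
      (∃ y ∈ LinearMap.range
          (LinearMap.rTensor M (⋀[R]^1 (Fin (n + 1) → R)).subtype),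
        LinearMap.rTensor M
            (CliffordAlgebra.contractLeft ((Pi.basisFun R (Fin (n + 1))).constr R f)) y
          = (1 : ExteriorAlgebra R (Fin (n + 1) → R)) ⊗ₜ[R] m) ↔
      m ∈ Ideal.span (Set.range f) • (⊤ : Submodule R M)) ∧
    Nonempty
      ((M ⧸ (Ideal.span (Set.range f) • (⊤ : Submodule R M))) ≃ₗ[R]
        ((Fin (n + 1) → ℕ) →₀ Polynomial (R ⧸ Ideal.span (Set.range f)))) := by
  classical
  have hι1 : ∀ vv : Fin (n + 1) → R,
      ExteriorAlgebra.ι R vv ∈ ⋀[R]^1 (Fin (n + 1) → R) := by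
    intro vv
    show _ ∈ LinearMap.range (ExteriorAlgebra.ι R (M := Fin (n + 1) → R)) ^ 1
    rw [pow_one]
    exact ⟨vv, rfl⟩
  have hι2 : ∀ z : (⋀[R]^1 (Fin (n + 1) → R)), ∃ vv : Fin (n + 1) → R,
      ExteriorAlgebra.ι R vv = (z : ExteriorAlgebra R (Fin (n + 1) → R)) := by
    intro z
    have h2 : (z : ExteriorAlgebra R (Fin (n + 1) → R)) ∈
        LinearMap.range (ExteriorAlgebra.ι R (M := Fin (n + 1) → R)) ^ 1 := z.2
    rw [pow_one] at h2
    exact h2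
  set I : Ideal R := Ideal.span (Set.range f) with hI
  set D : ExteriorAlgebra R (Fin (n + 1) → R) →ₗ[R] ExteriorAlgebra R (Fin (n + 1) → R) :=
    CliffordAlgebra.contractLeft ((Pi.basisFun R (Fin (n + 1))).constr R f) with hD
  let c : Module.Basis (ℕ × (Fin (n + 1) → ℕ)) R M := (Polynomial.basisMonomials R).smulTower b
  refine ⟨?_, ?_, ?_⟩
  · -- Part 1: exactness in negative degrees
    intro p hp x hx hdx
    obtain ⟨x', rfl⟩ := hx
    set u0 : (ℕ × (Fin (n + 1) → ℕ)) →₀ (⋀[R]^p (Fin (n + 1) → R)) :=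
      Ebasis c _ x' with hu0
    have hzero : ∀ k, D ((u0 k : ExteriorAlgebra R (Fin (n + 1) → R))) = 0 := by
      intro k
      have h0 := congrArg (fun z => Ebasis c _ z k) hdx
      simp only [Ebasis_natural, Finsupp.mapRange_apply, map_zero, Finsupp.zero_apply] at h0
      exact h0
    choose y hy1 hy2 using fun k => hf p hp (u0 k) (u0 k).2 (hzero k)
    set w : (ℕ × (Fin (n + 1) → ℕ)) →₀ (⋀[R]^(p + 1) (Fin (n + 1) → R)) :=
      Finsupp.onFinset u0.support
        (fun k => if h : u0 k = 0 then 0 else ⟨y k, hy1 k⟩)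
        (by intro k hk
            by_contra h
            simp [Finsupp.notMem_support_iff.mp h] at hk) with hw
    refine ⟨LinearMap.rTensor M (⋀[R]^(p + 1) (Fin (n + 1) → R)).subtype
        ((Ebasis c _).symm w), ⟨_, rfl⟩, ?_⟩
    apply (Ebasis c _).injective
    rw [Ebasis_natural, Ebasis_natural, Ebasis_natural, LinearEquiv.apply_symm_apply, ← hu0]
    ext k
    simp only [Finsupp.mapRange_apply]
    by_cases h : u0 k = 0
    · simp [hw, Finsupp.onFinset_apply, h, map_zero]
    · simp only [hw, Finsupp.onFinset_apply, dif_neg h]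
      exact hy2 k
  · -- Part 2
    intro m
    constructor
    · rintro ⟨yy, ⟨y', rfl⟩, hyeq⟩
      have h := congrArg (Ebasis c _) hyeq
      rw [Ebasis_natural] at h
      have hcoef : ∀ k, c.repr m k ∈ I := by
        intro k
        have hk := congrArg (fun z => z k) h
        simp only [Finsupp.mapRange_apply] at hk
        rw [Ebasis_natural] at hk
        simp only [Finsupp.mapRange_apply] at hk
        -- the element (Ebasis c _ y' k) lies in ⋀^1, hence is ι of some vector
        obtain ⟨v, hv⟩ := hι2 (Ebasis c _ y' k)
        simp only [Submodule.subtype_apply] at hk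
        rw [← hv, hD, CliffordAlgebra.contractLeft_ι, Ebasis_tmul] at hk
        have hk' : algebraMap R (ExteriorAlgebra R (Fin (n + 1) → R))
            (((Pi.basisFun R (Fin (n + 1))).constr R f) v) =
            algebraMap R _ (c.repr m k) := by
          rw [hk, Algebra.algebraMap_eq_smul_one]
        have hinj := ExteriorAlgebra.algebraMap_leftInverse (M := Fin (n + 1) → R) (R := R)
        have := hinj.injective hk'
        rw [← this]
        rw [Module.Basis.constr_apply_fintype]
        refine Ideal.sum_mem _ fun i _ => ?_
        have : f i ∈ I := Ideal.subset_span ⟨i, rfl⟩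
        simpa [smul_eq_mul] using I.mul_mem_left _ this
      have hrepr := c.linearCombination_repr m
      rw [← hrepr]
      refine Submodule.sum_mem _ fun k hk => ?_
      exact Submodule.smul_mem_smul (hcoef k) trivial
    · intro hm
      set P : Submodule R M := Submodule.comap
        ((TensorProduct.mk R (ExteriorAlgebra R (Fin (n + 1) → R)) M) 1)
        (Submodule.map (LinearMap.rTensor M D)
          (LinearMap.range (LinearMap.rTensor M (⋀[R]^1 (Fin (n + 1) → R)).subtype))) with hP
      have key : I • (⊤ : Submodule R M) ≤ P := by
        rw [Submodule.smul_le]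
        intro r hr m' _
        refine Submodule.span_induction (p := fun r _ => ∀ m' : M, r • m' ∈ P)
          ?_ ?_ ?_ ?_ hr m'
        · rintro r ⟨i, rfl⟩ m'
          simp only [hP, Submodule.mem_comap, Submodule.mem_map]
          refine ⟨LinearMap.rTensor M (⋀[R]^1 (Fin (n + 1) → R)).subtype
              ((⟨ExteriorAlgebra.ι R (Pi.basisFun R (Fin (n + 1)) i), hι1 _⟩ :
                ⋀[R]^1 (Fin (n + 1) → R)) ⊗ₜ[R] m'),
            ⟨⟨_, rfl⟩, ?_⟩⟩
          rw [LinearMap.rTensor_tmul, LinearMap.rTensor_tmul]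
          simp only [Submodule.coe_subtype, hD, CliffordAlgebra.contractLeft_ι,
            Module.Basis.constr_basis, TensorProduct.mk_apply]
          rw [Algebra.algebraMap_eq_smul_one, TensorProduct.smul_tmul]
        · intro m'; simpa using P.zero_mem
        · intro r s _ _ ihr ihs m'
          rw [add_smul]; exact P.add_mem (ihr m') (ihs m')
        · intro a r _ ih m'
          rw [smul_eq_mul, mul_smul]; exact P.smul_mem a (ih m')
      have := key hm
      simp only [hP, Submodule.mem_comap, Submodule.mem_map, TensorProduct.mk_apply] at this
      obtain ⟨yy, hy1, hy2⟩ := this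
      exact ⟨yy, hy1, hy2⟩
  · -- Part 3
    set q : Polynomial R →ₐ[R] Polynomial (R ⧸ I) :=
      Polynomial.mapAlgHom (Ideal.Quotient.mkₐ R I) with hq
    set φ : M →ₗ[R] ((Fin (n + 1) → ℕ) →₀ Polynomial (R ⧸ I)) :=
      (Finsupp.mapRange.linearMap q.toLinearMap).comp
        (b.repr.restrictScalars R).toLinearMap with hφ
    have hsurj : Function.Surjective φ := by
      rw [hφ]
      intro z
      obtain ⟨w, hw⟩ := (Finsupp.mapRange_surjective (α := Fin (n + 1) → ℕ) (⇑q) (map_zero q)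
        (Polynomial.map_surjective _ Ideal.Quotient.mk_surjective)) z
      exact ⟨b.repr.symm w, by simpa using hw⟩
    have hker : LinearMap.ker φ = I • (⊤ : Submodule R M) := by
      apply le_antisymm
      · intro m hm
        simp only [hφ, LinearMap.mem_ker, LinearMap.comp_apply, LinearEquiv.coe_coe,
          LinearEquiv.restrictScalars_apply, Finsupp.mapRange.linearMap_apply] at hm
        have hcomp : ∀ k, (b.repr m) k ∈ Ideal.map (Polynomial.C (R := R)) I := by
          intro k
          have := congrArg (fun z => z k) hm
          simp only [Finsupp.mapRange_apply, Finsupp.zero_apply] at this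
          have hker' : (b.repr m) k ∈ RingHom.ker (Polynomial.mapRingHom (Ideal.Quotient.mk I)) := by
            have h2 := this
            simp [hq, Polynomial.mapAlgHom] at h2
            rw [RingHom.mem_ker, Polynomial.coe_mapRingHom]
            exact h2
          rw [Polynomial.ker_mapRingHom, Ideal.mk_ker] at hker'
          exact hker'
        have hrepr := b.linearCombination_repr m
        rw [← hrepr]
        refine Submodule.sum_mem _ fun k hk => ?_
        -- (b.repr m k) • b k ∈ I • ⊤ since the coefficient lies in I.map C
        have : ∀ pgen ∈ Ideal.map (Polynomial.C (R := R)) I, ∀ m' : M,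
            pgen • m' ∈ I • (⊤ : Submodule R M) := by
          intro pgen hpgen
          refine Submodule.span_induction
            (p := fun pgen _ => ∀ m' : M, pgen • m' ∈ I • (⊤ : Submodule R M)) ?_ ?_ ?_ ?_ hpgen
          · rintro p ⟨r, hr, rfl⟩ m'
            rw [← Polynomial.algebraMap_eq, algebraMap_smul]
            exact Submodule.smul_mem_smul hr trivial
          · intro m'; simpa using Submodule.zero_mem _
          · intro p1 p2 _ _ h1 h2 m'; rw [add_smul]; exact Submodule.add_mem _ (h1 m') (h2 m')
          · intro a p _ hph m'
            rw [smul_eq_mul, mul_smul]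
            have := hph (a • m')
            rwa [smul_comm] at this
        exact this _ (hcomp k) _
      · rw [Submodule.smul_le]
        intro r hr m' _
        simp only [LinearMap.mem_ker, map_smul]
        ext k
        simp only [hφ, LinearMap.comp_apply, LinearEquiv.coe_coe,
          LinearEquiv.restrictScalars_apply, Finsupp.mapRange.linearMap_apply,
          Finsupp.smul_apply, Finsupp.mapRange_apply, Finsupp.coe_zero, Pi.zero_apply]
        rw [algebra_compatible_smul (Polynomial (R ⧸ I)) r]
        have : algebraMap R (Polynomial (R ⧸ I)) r = 0 := by
          rw [show algebraMap R (Polynomial (R ⧸ I)) r = Polynomial.C (Ideal.Quotient.mk I r) from rfl]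
          simp [Ideal.Quotient.eq_zero_iff_mem.mpr hr]
        rw [this, zero_smul]
    exact ⟨(Submodule.quotEquivOfEq _ _ hker.symm).trans
      (LinearMap.quotKerEquivOfSurjective φ hsurj)⟩
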